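/- For the single-item case (m = 1, all n raters evaluate the one item), the fixed-point equation r = Σ_i (c₀ − (E_i − r)²) E_i / Σ_i (c₀ − (E_i − r)²) has a unique solution in [0,1] whenever c₀ > 1 is sufficiently large (e.g., c₀ > 1 + 2n suffices), and this solution depends continuously on c₀. -/

import Mathlib

open Filter Set

noncomputable def Gfun {n : ℕ} (E : Fin n → ℝ) (c r : ℝ) : ℝ :=
  ∑ i : Fin n, (c - (E i - r) ^ 2) * (E i - r)

lemma Gfun_hasDerivAt {n : ℕ} (E : Fin n → ℝ) (c r : ℝ) :
    HasDerivAt (Gfun E c) (∑ i : Fin n, (3 * (E i - r) ^ 2 - c)) r := by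
  have h : ∀ i : Fin n, i ∈ Finset.univ →
      HasDerivAt (fun r => (c - (E i - r) ^ 2) * (E i - r)) (3 * (E i - r) ^ 2 - c) r := by
    intro i _
    have hu : HasDerivAt (fun r : ℝ => E i - r) (-1) r := (hasDerivAt_id r).const_sub (E i)
    have h1 : HasDerivAt (fun r : ℝ => c - (E i - r) ^ 2)
        (-(2 * (E i - r) ^ 1 * (-1))) r := (hu.pow 2).const_sub c
    have := h1.mul hu
    exact this.congr_deriv (by ring)
  have := HasDerivAt.fun_sum h
  exact this

lemma Gfun_cont {n : ℕ} (E : Fin n → ℝ) (c : ℝ) : Continuous (Gfun E c) := by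
  have : Differentiable ℝ (Gfun E c) :=
    fun r => (Gfun_hasDerivAt E c r).differentiableAt
  exact this.continuous

lemma Gfun_strictAnti {n : ℕ} (hn : 0 < n) (E : Fin n → ℝ)
    (hE : ∀ i, E i ∈ Set.Icc (0:ℝ) 1) {c : ℝ} (hc : 3 < c) :
    StrictAntiOn (Gfun E c) (Set.Icc 0 1) := by
  haveI : Nonempty (Fin n) := Fin.pos_iff_nonempty.mp hn
  apply strictAntiOn_of_deriv_neg (convex_Icc 0 1) (Gfun_cont E c).continuousOn
  intro r hr
  rw [interior_Icc] at hr
  rw [(Gfun_hasDerivAt E c r).deriv]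
  apply Finset.sum_neg ?_ Finset.univ_nonempty
  intro i _
  have h1 := (hE i).1; have h2 := (hE i).2
  nlinarith [hr.1, hr.2]

lemma Gfun_zero_nonneg {n : ℕ} (E : Fin n → ℝ)
    (hE : ∀ i, E i ∈ Set.Icc (0:ℝ) 1) {c : ℝ} (hc : 3 < c) :
    0 ≤ Gfun E c 0 := by
  apply Finset.sum_nonneg
  intro i _
  have h1 := (hE i).1; have h2 := (hE i).2
  have : (0:ℝ) ≤ c - (E i - 0) ^ 2 := by nlinarith
  nlinarith

lemma Gfun_one_nonpos {n : ℕ} (E : Fin n → ℝ)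
    (hE : ∀ i, E i ∈ Set.Icc (0:ℝ) 1) {c : ℝ} (hc : 3 < c) :
    Gfun E c 1 ≤ 0 := by
  apply Finset.sum_nonpos
  intro i _
  have h1 := (hE i).1; have h2 := (hE i).2
  have : (0:ℝ) ≤ c - (E i - 1) ^ 2 := by nlinarith
  nlinarith

lemma Gfun_cont_c {n : ℕ} (E : Fin n → ℝ) (b : ℝ) :
    Continuous (fun c => Gfun E c b) := by
  unfold Gfun
  exact continuous_finset_sum _ fun i _ =>
    (continuous_id.sub continuous_const).mul continuous_const

lemma eventually_root_lt {n : ℕ} (hn : 0 < n) (E : Fin n → ℝ)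
    (hE : ∀ i, E i ∈ Set.Icc (0:ℝ) 1) {c₀ b : ℝ} (hc₀ : 3 < c₀)
    (hb : b ∈ Set.Icc (0:ℝ) 1) (hGb : Gfun E c₀ b < 0) (ρ : ℝ → ℝ)
    (hρ : ∀ c, 3 < c → ρ c ∈ Set.Icc (0:ℝ) 1 ∧ Gfun E c (ρ c) = 0) :
    ∀ᶠ c in nhds c₀, ρ c < b := by
  have h1 : ∀ᶠ c in nhds c₀, Gfun E c b < 0 :=
    ((Gfun_cont_c E b).continuousAt).eventually (gt_mem_nhds hGb)
  filter_upwards [h1, eventually_gt_nhds hc₀] with c hcb hc3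
  obtain ⟨hmem, hzero⟩ := hρ c hc3
  by_contra h
  push_neg at h
  have := (Gfun_strictAnti hn E hE hc3).antitoneOn hb hmem h
  linarith

lemma eventually_lt_root {n : ℕ} (hn : 0 < n) (E : Fin n → ℝ)
    (hE : ∀ i, E i ∈ Set.Icc (0:ℝ) 1) {c₀ a : ℝ} (hc₀ : 3 < c₀)
    (ha : a ∈ Set.Icc (0:ℝ) 1) (hGa : 0 < Gfun E c₀ a) (ρ : ℝ → ℝ)
    (hρ : ∀ c, 3 < c → ρ c ∈ Set.Icc (0:ℝ) 1 ∧ Gfun E c (ρ c) = 0) :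
    ∀ᶠ c in nhds c₀, a < ρ c := by
  have h1 : ∀ᶠ c in nhds c₀, 0 < Gfun E c a :=
    ((Gfun_cont_c E a).continuousAt).eventually (lt_mem_nhds hGa)
  filter_upwards [h1, eventually_gt_nhds hc₀] with c hca hc3
  obtain ⟨hmem, hzero⟩ := hρ c hc3
  by_contra h
  push_neg at h
  have := (Gfun_strictAnti hn E hE hc3).antitoneOn hmem ha h
  linarith

theorem single_item_unique_root
    (n : ℕ) (hn : 0 < n) (E : Fin n → ℝ) (hE : ∀ i, E i ∈ Set.Icc (0:ℝ) 1)
    (g : ℝ → ℝ → ℝ)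
    (hg : ∀ c₀ r, g c₀ r = ∑ i : Fin n, (c₀ - (E i - r) ^ 2) * (E i - r)) :
    (∀ c₀ : ℝ, 3 < c₀ → ∃! r, r ∈ Set.Icc (0:ℝ) 1 ∧ g c₀ r = 0) ∧
    (∀ ρ : ℝ → ℝ, (∀ c₀ : ℝ, 3 < c₀ → ρ c₀ ∈ Set.Icc (0:ℝ) 1 ∧ g c₀ (ρ c₀) = 0) →
      ContinuousOn ρ (Set.Ioi (3:ℝ))) := by
  have hgG : ∀ c r, g c r = Gfun E c r := fun c r => hg c r
  constructor
  · intro c₀ hc₀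
    -- existence via IVT
    have hsub := intermediate_value_Icc' (by norm_num : (0:ℝ) ≤ 1)
      (Gfun_cont E c₀).continuousOn
    have h0 : (0:ℝ) ∈ Set.Icc (Gfun E c₀ 1) (Gfun E c₀ 0) :=
      ⟨Gfun_one_nonpos E hE hc₀, Gfun_zero_nonneg E hE hc₀⟩
    obtain ⟨r, hrIcc, hr0⟩ := hsub h0
    refine ⟨r, ⟨hrIcc, by rw [hgG]; exact hr0⟩, ?_⟩
    intro y ⟨hyIcc, hy0⟩
    rw [hgG] at hy0
    exact (Gfun_strictAnti hn E hE hc₀).injOn hyIcc hrIcc (by rw [hy0, hr0])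
  · intro ρ hρ
    have hρ' : ∀ c, 3 < c → ρ c ∈ Set.Icc (0:ℝ) 1 ∧ Gfun E c (ρ c) = 0 := by
      intro c hc
      obtain ⟨h1, h2⟩ := hρ c hc
      exact ⟨h1, by rw [← hgG]; exact h2⟩
    intro c₀ hc₀
    rw [Set.mem_Ioi] at hc₀
    apply ContinuousAt.continuousWithinAt
    rw [ContinuousAt, Metric.tendsto_nhds]
    intro ε hε
    obtain ⟨hr₀Icc, hr₀0⟩ := hρ' c₀ hc₀
    set r₀ := ρ c₀ with hr₀def
    have hupper : ∀ᶠ c in nhds c₀, ρ c < r₀ + ε := by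
      by_cases hb1 : r₀ + ε ≤ 1
      · have hbIcc : r₀ + ε ∈ Set.Icc (0:ℝ) 1 := ⟨by linarith [hr₀Icc.1], hb1⟩
        have hGb : Gfun E c₀ (r₀ + ε) < 0 := by
          have := (Gfun_strictAnti hn E hE hc₀) hr₀Icc hbIcc (by linarith)
          linarith
        exact eventually_root_lt hn E hE hc₀ hbIcc hGb ρ hρ'
      · filter_upwards [eventually_gt_nhds hc₀] with c hc3
        have := (hρ' c hc3).1.2
        linarith
    have hlower : ∀ᶠ c in nhds c₀, r₀ - ε < ρ c := by
      by_cases ha0 : 0 ≤ r₀ - ε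
      · have haIcc : r₀ - ε ∈ Set.Icc (0:ℝ) 1 := ⟨ha0, by linarith [hr₀Icc.2]⟩
        have hGa : 0 < Gfun E c₀ (r₀ - ε) := by
          have := (Gfun_strictAnti hn E hE hc₀) haIcc hr₀Icc (by linarith)
          linarith
        exact eventually_lt_root hn E hE hc₀ haIcc hGa ρ hρ'
      · filter_upwards [eventually_gt_nhds hc₀] with c hc3
        have := (hρ' c hc3).1.1
        linarith
    filter_upwards [hupper, hlower] with c h1 h2
    rw [Real.dist_eq, abs_lt]
    constructor <;> linarith
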